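/- Every 2-dimensional linear subspace V of ℝ^m realizes at most 2m distinct sign vectors in {-1, +1}^m (i.e., sign vectors with no zero entries). -/

import Mathlib

open Real Set

lemma sign_div_pos (t r : ℝ) (hr : 0 < r) : Real.sign (t / r) = Real.sign t := by
  rcases lt_trichotomy t 0 with h | h | h
  · rw [Real.sign_of_neg h, Real.sign_of_neg (div_neg_of_neg_of_pos h hr)]
  · simp [h]
  · rw [Real.sign_of_pos h, Real.sign_of_pos (div_pos h hr)]

lemma amplitude_phase {a c : ℝ} (h : ¬(a = 0 ∧ c = 0)) :
    ∃ R φ : ℝ, 0 < R ∧ ∀ θ, a * Real.cos θ + c * Real.sin θ = R * Real.cos (θ - φ) := by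
  set z : ℂ := ⟨a, c⟩ with hz
  have hz0 : z ≠ 0 := by
    intro h0
    apply h
    constructor
    · simpa using congrArg Complex.re h0
    · simpa using congrArg Complex.im h0
  refine ⟨‖z‖, Complex.arg z, (norm_pos_iff.mpr hz0), fun θ => ?_⟩
  have hc := Complex.cos_arg hz0
  have hs := Complex.sin_arg z
  have hR : (‖z‖ : ℝ) ≠ 0 := (norm_pos_iff.mpr hz0).ne'
  rw [Real.cos_sub, hc, hs]
  simp only [hz]
  field_simp
  exact (mul_div_cancel_right₀ _ (hR : ‖({ re := a, im := c } : ℂ)‖ ≠ 0)).symm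

lemma same_sign {f : ℝ → ℝ} (hf : Continuous f) {a b : ℝ} (hab : a ≤ b)
    (h : ∀ θ ∈ Set.Icc a b, f θ ≠ 0) : Real.sign (f a) = Real.sign (f b) := by
  have ha := h a ⟨le_refl a, hab⟩
  have hb := h b ⟨hab, le_refl b⟩
  rcases lt_or_gt_of_ne ha with ha1 | ha1 <;> rcases lt_or_gt_of_ne hb with hb1 | hb1
  · rw [Real.sign_of_neg ha1, Real.sign_of_neg hb1]
  · exfalso
    obtain ⟨c, hc, hc0⟩ := intermediate_value_Ioo hab hf.continuousOn
      (show (0:ℝ) ∈ Set.Ioo (f a) (f b) from ⟨ha1, hb1⟩)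
    exact h c ⟨hc.1.le, hc.2.le⟩ hc0
  · exfalso
    obtain ⟨c, hc, hc0⟩ := intermediate_value_Ioo' hab hf.continuousOn
      (show (0:ℝ) ∈ Set.Ioo (f b) (f a) from ⟨hb1, ha1⟩)
    exact h c ⟨hc.1.le, hc.2.le⟩ hc0
  · rw [Real.sign_of_pos ha1, Real.sign_of_pos hb1]

theorem stmt_5 (m : ℕ) (V : Submodule ℝ (Fin m → ℝ))
    (hV : Module.finrank ℝ V = 2) :
    Set.ncard {s : Fin m → ℝ |
        (∀ i, s i = -1 ∨ s i = 1) ∧ ∃ v ∈ V, ∀ i, Real.sign (v i) = s i}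
      ≤ 2 * m := by
  classical
  set S := {s : Fin m → ℝ |
      (∀ i, s i = -1 ∨ s i = 1) ∧ ∃ v ∈ V, ∀ i, Real.sign (v i) = s i} with hSdef
  rcases S.eq_empty_or_nonempty with hSe | ⟨s₀, hs₀⟩
  · rw [hSe]; simp
  have hm : 2 ≤ m := by
    have h1 := Submodule.finrank_le V
    rw [hV, Module.finrank_pi] at h1
    simpa using h1
  have hm0 : 0 < m := by omega
  have hπ := Real.pi_pos
  haveI : Module.Finite ℝ V := inferInstance
  let b := Module.finBasisOfFinrankEq ℝ V hV
  let B1 : Fin m → ℝ := ((b 0 : V) : Fin m → ℝ)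
  let B2 : Fin m → ℝ := ((b 1 : V) : Fin m → ℝ)
  let g : Fin m → ℝ → ℝ := fun i θ => B1 i * Real.cos θ + B2 i * Real.sin θ
  -- every s ∈ S is realized by some angle θ
  have hwit : ∀ s ∈ S, ∃ θ : ℝ, ∀ i, Real.sign (g i θ) = s i := by
    intro s hs
    obtain ⟨hs1, v, hv, hsgn⟩ := hs
    set x : ℝ := b.repr ⟨v, hv⟩ 0 with hx
    set y : ℝ := b.repr ⟨v, hv⟩ 1 with hy
    have hrepr : (⟨v, hv⟩ : V) = x • b 0 + y • b 1 := by
      have := b.sum_repr ⟨v, hv⟩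
      rw [Fin.sum_univ_two] at this
      exact this.symm
    have hvxy : ∀ i, v i = x * B1 i + y * B2 i := by
      intro i
      have := congrArg (fun w : V => (w : Fin m → ℝ) i) hrepr
      simpa [B1, B2] using this
    have hs0ne : s ⟨0, hm0⟩ ≠ 0 := by
      rcases hs1 ⟨0, hm0⟩ with h | h <;> rw [h] <;> norm_num
    have hv0 : v ⟨0, hm0⟩ ≠ 0 := by
      intro h0
      apply hs0ne
      rw [← hsgn ⟨0, hm0⟩, h0, Real.sign_zero]
    set z : ℂ := ⟨x, y⟩ with hz
    have hz0 : z ≠ 0 := by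
      intro h0
      apply hv0
      have hx0 : x = 0 := by simpa using congrArg Complex.re h0
      have hy0 : y = 0 := by simpa using congrArg Complex.im h0
      rw [hvxy, hx0, hy0]; ring
    refine ⟨Complex.arg z, fun i => ?_⟩
    have hr : 0 < ‖z‖ := norm_pos_iff.mpr hz0
    have hgθ : g i (Complex.arg z) = v i / ‖z‖ := by
      rw [hvxy i]
      simp only [g, Complex.cos_arg hz0, Complex.sin_arg z]
      simp only [hz]
      field_simp
    rw [hgθ, sign_div_pos _ _ hr, hsgn i]
  choose! Θ hΘ using hwit
  -- coefficients are nowhere both zero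
  have hne : ∀ i, ¬(B1 i = 0 ∧ B2 i = 0) := by
    intro i ⟨h1, h2⟩
    have := hΘ s₀ hs₀ i
    rw [show g i (Θ s₀) = 0 by simp [g, h1, h2], Real.sign_zero] at this
    rcases hs₀.1 i with h | h <;> rw [h] at this <;> norm_num at this
  choose R φ hR hgφ using fun i => amplitude_phase (hne i)
  have hzero : ∀ i θ, g i θ = 0 ↔ Real.cos (θ - φ i) = 0 := by
    intro i θ
    rw [show g i θ = R i * Real.cos (θ - φ i) from hgφ i θ]
    constructor
    · intro h
      rcases mul_eq_zero.1 h with h | h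
      · exact absurd h (hR i).ne'
      · exact h
    · intro h; rw [h, mul_zero]
  have hgcont : ∀ i, Continuous (g i) := by
    intro i; exact (continuous_const.mul Real.continuous_cos).add
      (continuous_const.mul Real.continuous_sin)
  set Z : Set ℝ := {θ : ℝ | ∃ i, Real.cos (θ - φ i) = 0} with hZdef
  have hZclosed : IsClosed Z := by
    have : Z = ⋃ i : Fin m, (fun θ => Real.cos (θ - φ i)) ⁻¹' {0} := by
      ext θ; simp [hZdef]
    rw [this]
    exact isClosed_iUnion_of_finite fun i =>
      isClosed_singleton.preimage (Real.continuous_cos.comp (continuous_id.sub continuous_const))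
  -- the last zero before the witness angle
  set T : (Fin m → ℝ) → ℝ := fun s => sSup (Z ∩ Icc (Θ s - π) (Θ s)) with hTdef
  have hA : ∀ s : Fin m → ℝ, T s ∈ Z ∩ Icc (Θ s - π) (Θ s) := by
    intro s
    have hcomp : IsCompact (Z ∩ Icc (Θ s - π) (Θ s)) := isCompact_Icc.inter_left hZclosed
    apply hcomp.sSup_mem
    -- nonempty: a zero of the first coordinate function
    set φ₀ := φ ⟨0, hm0⟩ with hφ₀
    set c : ℝ := (Θ s - φ₀ - π / 2) / π with hc
    set k : ℤ := ⌊c⌋ with hk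
    refine ⟨φ₀ + (2 * k + 1) * π / 2, ⟨⟨0, hm0⟩, ?_⟩, ?_, ?_⟩
    · rw [show φ₀ + (2 * (k:ℝ) + 1) * π / 2 - φ₀ = (2 * (k:ℝ) + 1) * π / 2 by ring]
      exact Real.cos_eq_zero_iff.2 ⟨k, rfl⟩
    · have h1 : c - 1 < (k : ℝ) := Int.sub_one_lt_floor c
      have h2 : (c - 1) * π < (k:ℝ) * π := by
        exact mul_lt_mul_of_pos_right h1 hπ
      have h3 : c * π = Θ s - φ₀ - π / 2 := by
        rw [hc]; field_simp
      nlinarith [h2, h3]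
    · have h1 : (k : ℝ) ≤ c := Int.floor_le c
      have h2 : (k:ℝ) * π ≤ c * π := mul_le_mul_of_nonneg_right h1 hπ.le
      have h3 : c * π = Θ s - φ₀ - π / 2 := by
        rw [hc]; field_simp
      nlinarith [h2, h3]
  have hTlt : ∀ s ∈ S, T s < Θ s := by
    intro s hs
    rcases lt_or_eq_of_le (hA s).2.2 with h | h
    · exact h
    exfalso
    obtain ⟨i, hi⟩ := (hA s).1
    have hg0 : g i (Θ s) = 0 := (hzero i (Θ s)).2 (h ▸ hi)
    have := hΘ s hs i
    rw [hg0, Real.sign_zero] at this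
    rcases hs.1 i with h' | h' <;> rw [h'] at this <;> norm_num at this
  have hnozero : ∀ s ∈ S, ∀ θ ∈ Ioc (T s) (Θ s), θ ∉ Z := by
    intro s hs θ hθ hθZ
    have h1 : θ ∈ Z ∩ Icc (Θ s - π) (Θ s) := by
      refine ⟨hθZ, ?_, hθ.2⟩
      have := (hA s).2.1
      linarith [hθ.1]
    have h2 : θ ≤ T s := le_csSup (isCompact_Icc.inter_left hZclosed).bddAbove h1
    linarith [hθ.1]
  have hsign : ∀ s ∈ S, ∀ θ ∈ Ioc (T s) (Θ s), ∀ i, Real.sign (g i θ) = s i := by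
    intro s hs θ hθ i
    rw [← hΘ s hs i]
    exact same_sign (hgcont i) hθ.2 fun c hc =>
      fun h0 => hnozero s hs c ⟨lt_of_lt_of_le hθ.1 hc.1, hc.2⟩ ((hzero i c).1 h0 |> fun h => ⟨i, h⟩)
  -- periodicity
  have hper : ∀ i (θ : ℝ) (k : ℤ), g i (θ + k * (2 * π)) = g i θ := by
    intro i θ k
    simp only [g, Real.cos_add_int_mul_two_pi, Real.sin_add_int_mul_two_pi]
  -- the injection
  set f : (Fin m → ℝ) → ℝ := fun s => T s - (⌊T s / (2 * π)⌋ : ℝ) * (2 * π) with hfdef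
  -- target finset
  set K : Fin m → ℤ := fun i => ⌈(-φ i - π / 2) / π⌉ with hK
  set F : Finset ℝ := Finset.univ.biUnion (fun i : Fin m =>
    {φ i + (2 * (K i : ℝ) + 1) * π / 2, φ i + (2 * ((K i : ℝ) + 1) + 1) * π / 2}) with hF
  have hFcard : F.card ≤ 2 * m := by
    calc F.card ≤ ∑ i : Fin m, ({φ i + (2 * (K i : ℝ) + 1) * π / 2,
        φ i + (2 * ((K i : ℝ) + 1) + 1) * π / 2} : Finset ℝ).card := Finset.card_biUnion_le
    _ ≤ ∑ _i : Fin m, 2 := by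
        apply Finset.sum_le_sum
        intro i _
        apply le_trans (Finset.card_insert_le _ _)
        simp
    _ = 2 * m := by simp [mul_comm]
  have hf01 : ∀ s : Fin m → ℝ, f s ∈ Ico (0:ℝ) (2 * π) := by
    intro s
    set n : ℤ := ⌊T s / (2 * π)⌋ with hn
    have h2π : (0:ℝ) < 2 * π := by linarith
    have h1 : (n : ℝ) ≤ T s / (2 * π) := Int.floor_le _
    have h2 : T s / (2 * π) < n + 1 := Int.lt_floor_add_one _
    have h1' : (n : ℝ) * (2 * π) ≤ T s := (le_div_iff₀ h2π).1 h1
    have h2' : T s < ((n : ℝ) + 1) * (2 * π) := (div_lt_iff₀ h2π).1 h2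
    constructor
    · simp only [hfdef]; linarith
    · simp only [hfdef]; linarith
  have hfmem : ∀ s ∈ S, f s ∈ (F : Set ℝ) := by
    intro s hs
    obtain ⟨i, hi⟩ := (hA s).1
    set n : ℤ := ⌊T s / (2 * π)⌋ with hn
    have hcos : Real.cos (f s - φ i) = 0 := by
      have : f s - φ i = (T s - φ i) + (-n : ℤ) * (2 * π) := by
        simp only [hfdef]; push_cast; ring
      rw [this, Real.cos_add_int_mul_two_pi]
      exact hi
    obtain ⟨k, hk⟩ := Real.cos_eq_zero_iff.1 hcos
    have hfs : f s = φ i + (2 * (k:ℝ) + 1) * π / 2 := by linarith [hk]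
    obtain ⟨hge, hlt⟩ := hf01 s
    -- bounds on k
    have hkK : k = K i ∨ k = K i + 1 := by
      have h0 : 0 ≤ φ i + ((k:ℝ) * π + π / 2) := by
        calc (0:ℝ) ≤ f s := hge
        _ = φ i + ((k:ℝ) * π + π / 2) := by rw [hfs]; ring
      have h0' : φ i + ((k:ℝ) * π + π / 2) < 2 * π := by
        calc φ i + ((k:ℝ) * π + π / 2) = f s := by rw [hfs]; ring
        _ < 2 * π := hlt
      have hq : (-φ i - π / 2) / π ≤ (k : ℝ) := by
        rw [div_le_iff₀ hπ]
        linarith [h0]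
      have hKk : K i ≤ k := Int.ceil_le.2 hq
      have hub : (k : ℝ) - 2 < (-φ i - π / 2) / π := by
        rw [lt_div_iff₀ hπ]
        have he2 : ((k:ℝ) - 2) * π = (k:ℝ) * π - 2 * π := by ring
        linarith [h0']
      have h2 : ((k : ℝ) - 2) < (K i : ℝ) := lt_of_lt_of_le hub (Int.le_ceil _)
      have h3 : k - 2 < K i := by exact_mod_cast h2
      omega
    have hmem2 : f s = φ i + (2 * (K i:ℝ) + 1) * π / 2 ∨
        f s = φ i + (2 * ((K i:ℝ) + 1) + 1) * π / 2 := by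
      rcases hkK with h | h
      · left; rw [hfs, h]
      · right; rw [hfs, h]; push_cast; ring
    simp only [hF, Finset.coe_biUnion, Finset.coe_univ, Set.mem_iUnion]
    refine ⟨i, trivial, ?_⟩
    rw [Finset.coe_insert, Finset.coe_singleton]
    exact hmem2
  -- injectivity
  have hinj : Set.InjOn f S := by
    intro s hs s' hs' hff
    set n : ℤ := ⌊T s / (2 * π)⌋ with hn
    set n' : ℤ := ⌊T s' / (2 * π)⌋ with hn'
    have hTT : T s' = T s + ((n' - n : ℤ) : ℝ) * (2 * π) := by
      have : T s - (n : ℝ) * (2 * π) = T s' - (n' : ℝ) * (2 * π) := hff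
      push_cast
      linarith
    set k : ℤ := n' - n with hkd
    set θstar : ℝ := min (Θ s) (Θ s' - (k : ℝ) * (2 * π)) with hθs
    have hts : T s < Θ s := hTlt s hs
    have hts' : T s' < Θ s' := hTlt s' hs'
    have h1 : θstar ∈ Ioc (T s) (Θ s) := by
      constructor
      · apply lt_min hts
        rw [hTT] at hts'
        linarith
      · exact min_le_left _ _
    have h2 : θstar + (k : ℝ) * (2 * π) ∈ Ioc (T s') (Θ s') := by
      constructor
      · rw [hTT]
        have := h1.1
        linarith
      · have := min_le_right (Θ s) (Θ s' - (k : ℝ) * (2 * π))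
        linarith [this]
    funext i
    have hA1 := hsign s hs θstar h1 i
    have hA2 := hsign s' hs' (θstar + (k : ℝ) * (2 * π)) h2 i
    rw [hper i θstar k] at hA2
    rw [← hA1, ← hA2]
  calc S.ncard ≤ (F : Set ℝ).ncard :=
        Set.ncard_le_ncard_of_injOn f hfmem hinj (F.finite_toSet)
    _ = F.card := Set.ncard_coe_finset F
    _ ≤ 2 * m := hFcard
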